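/- Fix p ≥ 1, a matrix norm ‖·‖ on p × p real matrices that is submultiplicative, an invertible matrix Σ ∈ ℝ^{p×p}, and matrices Λ, Σ̂, Λ̂ ∈ ℝ^{p×p}. Suppose ‖Σ̂ − Σ‖ ≤ 1/(2‖Σ⁻¹‖). Then Σ̂ is invertible and ‖ Σ̂⁻¹Λ̂ − Σ⁻¹Λ + Σ⁻¹(Σ̂ − Σ)Σ⁻¹Λ − Σ⁻¹(Λ̂ − Λ) ‖ ≤ 2‖Σ⁻¹‖³·‖Λ‖·‖Σ̂ − Σ‖² + 2‖Σ⁻¹‖²·‖Σ̂ − Σ‖·‖Λ̂ − Λ‖. -/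

import Mathlib

open Matrix

/-- Type synonym for `p × p` real matrices, shielding instances (in particular the
`Pi` topology on `Matrix`), so that we can endow it with a custom norm. -/
def MAux (p : ℕ) : Type := Matrix (Fin p) (Fin p) ℝ

instance (p : ℕ) : AddCommGroup (MAux p) :=
  inferInstanceAs (AddCommGroup (Matrix (Fin p) (Fin p) ℝ))

noncomputable instance (p : ℕ) : Module ℝ (MAux p) :=
  inferInstanceAs (Module ℝ (Matrix (Fin p) (Fin p) ℝ))

instance (p : ℕ) : Module.Finite ℝ (MAux p) :=
  inferInstanceAs (Module.Finite ℝ (Matrix (Fin p) (Fin p) ℝ))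

/-- The identity map from matrices to the synonym. -/
def toAux (p : ℕ) : Matrix (Fin p) (Fin p) ℝ → MAux p := fun A => A

/-- `A ↦ A *ᵥ v` as a linear map on the synonym. -/
def mulVecBy (p : ℕ) (v : Fin p → ℝ) : MAux p →ₗ[ℝ] (Fin p → ℝ) where
  toFun A := (A : Matrix (Fin p) (Fin p) ℝ) *ᵥ v
  map_add' A B := Matrix.add_mulVec A B v
  map_smul' c A := Matrix.smul_mulVec c A v

lemma aux16_no_eigen {p : ℕ} (N : Matrix (Fin p) (Fin p) ℝ → ℝ)
    (hN0 : ∀ A, N A = 0 ↔ A = 0)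
    (hNneg : ∀ A, 0 ≤ N A)
    (hNadd : ∀ A B, N (A + B) ≤ N A + N B)
    (hNsmul : ∀ (c : ℝ) (A), N (c • A) = |c| * N A)
    (hNmul : ∀ A B, N (A * B) ≤ N A * N B)
    (X : Matrix (Fin p) (Fin p) ℝ) (hX : N X ≤ 1 / 2)
    (v : Fin p → ℝ) (hv : v ≠ 0) (hXv : X *ᵥ v = -v) : False := by
  letI : NormedAddCommGroup (MAux p) :=
    AddGroupNorm.toNormedAddCommGroup
      { toFun := fun A => N A
        map_zero' := (hN0 0).mpr rfl
        add_le' := hNadd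
        neg' := fun A => by
          exact (show ∀ B : Matrix (Fin p) (Fin p) ℝ, N (-B) = N B from fun B => by
            have := hNsmul (-1) B
            simpa [neg_one_smul] using this) A
        eq_zero_of_map_eq_zero' := fun A h => (hN0 A).mp h }
  letI : NormedSpace ℝ (MAux p) := ⟨fun c x => le_of_eq (hNsmul c x)⟩
  have hg : Continuous (mulVecBy p v) := (mulVecBy p v).continuous_of_finiteDimensional
  -- the sequence (X*X)^(n+1), viewed in the synonym
  set a : ℕ → MAux p := fun n => toAux p ((X * X) ^ (n + 1)) with ha
  have hnorm : ∀ n, ‖a n‖ = N ((X * X) ^ (n + 1)) := fun n => rfl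
  have hXX : N (X * X) ≤ (1 / 4 : ℝ) := by
    calc N (X * X) ≤ N X * N X := hNmul X X
    _ ≤ (1 / 2) * (1 / 2) := mul_le_mul hX hX (hNneg X) (by norm_num)
    _ = 1 / 4 := by norm_num
  have hbound : ∀ n, ‖a n‖ ≤ (1 / 4 : ℝ) ^ (n + 1) := by
    intro n
    induction n with
    | zero => simpa [hnorm] using hXX
    | succ n ih =>
      rw [hnorm, pow_succ]
      calc N ((X * X) ^ (n + 1) * (X * X)) ≤ N ((X * X) ^ (n + 1)) * N (X * X) := hNmul _ _
      _ ≤ (1 / 4 : ℝ) ^ (n + 1) * (1 / 4) := by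
          apply mul_le_mul _ hXX (hNneg _) (by positivity)
          simpa [hnorm] using ih
      _ = (1 / 4 : ℝ) ^ (n + 2) := by ring
  have htend : Filter.Tendsto a Filter.atTop (nhds 0) := by
    apply squeeze_zero_norm hbound
    have : Filter.Tendsto (fun n : ℕ => (1 / 4 : ℝ) ^ n) Filter.atTop (nhds 0) :=
      tendsto_pow_atTop_nhds_zero_of_lt_one (by norm_num) (by norm_num)
    exact this.comp (Filter.tendsto_add_atTop_nat 1)
  have hXXv : (X * X) *ᵥ v = v := by
    rw [← Matrix.mulVec_mulVec, hXv, Matrix.mulVec_neg, hXv, neg_neg]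
  have hfix : ∀ n, (X * X) ^ (n + 1) *ᵥ v = v := by
    intro n
    induction n with
    | zero => simpa using hXXv
    | succ n ih =>
      rw [pow_succ, ← Matrix.mulVec_mulVec, hXXv, ih]
  have h1 : Filter.Tendsto (fun n => mulVecBy p v (a n)) Filter.atTop
      (nhds (mulVecBy p v 0)) := (hg.tendsto 0).comp htend
  have h2 : (fun n => mulVecBy p v (a n)) = fun _ => v := by
    funext n
    show (X * X) ^ (n + 1) *ᵥ v = v
    exact hfix n
  rw [h2, map_zero] at h1
  exact hv (tendsto_nhds_unique tendsto_const_nhds h1)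

/-- Deterministic second-order perturbation bound for `Σ̂⁻¹Λ̂` around `Σ⁻¹Λ`, for any
submultiplicative matrix norm `N`: if `N(Σ̂ − Σ) ≤ 1/(2 N(Σ⁻¹))` then `Σ̂` is invertible and
`N(Σ̂⁻¹Λ̂ − Σ⁻¹Λ + Σ⁻¹(Σ̂−Σ)Σ⁻¹Λ − Σ⁻¹(Λ̂−Λ))
  ≤ 2 N(Σ⁻¹)³ N(Λ) N(Σ̂−Σ)² + 2 N(Σ⁻¹)² N(Σ̂−Σ) N(Λ̂−Λ)`. -/
theorem stmt_16 {p : ℕ} (hp : 1 ≤ p)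
    (N : Matrix (Fin p) (Fin p) ℝ → ℝ)
    (hN0 : ∀ A, N A = 0 ↔ A = 0)
    (hNneg : ∀ A, 0 ≤ N A)
    (hNadd : ∀ A B, N (A + B) ≤ N A + N B)
    (hNsmul : ∀ (c : ℝ) (A), N (c • A) = |c| * N A)
    (hNmul : ∀ A B, N (A * B) ≤ N A * N B)
    (S L Shat Lhat : Matrix (Fin p) (Fin p) ℝ)
    (hS : IsUnit S)
    (hclose : N (Shat - S) ≤ 1 / (2 * N S⁻¹)) :
    IsUnit Shat ∧
      N (Shat⁻¹ * Lhat - S⁻¹ * L + S⁻¹ * (Shat - S) * S⁻¹ * L - S⁻¹ * (Lhat - L))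
        ≤ 2 * N S⁻¹ ^ 3 * N L * N (Shat - S) ^ 2
          + 2 * N S⁻¹ ^ 2 * N (Shat - S) * N (Lhat - L) := by
  have hSdet : IsUnit S.det := Matrix.isUnit_iff_isUnit_det S |>.mp hS
  have hSiS : S⁻¹ * S = 1 := Matrix.nonsing_inv_mul S hSdet
  have hSSi : S * S⁻¹ = 1 := Matrix.mul_nonsing_inv S hSdet
  -- the identity is nonzero
  have hone : (1 : Matrix (Fin p) (Fin p) ℝ) ≠ 0 := by
    intro h
    have := congrFun (congrFun h ⟨0, hp⟩) ⟨0, hp⟩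
    simp [Matrix.one_apply] at this
  -- N S⁻¹ > 0
  have hSine : S⁻¹ ≠ 0 := by
    intro h
    rw [h, zero_mul] at hSiS
    exact hone hSiS.symm
  have hs_pos : 0 < N S⁻¹ :=
    lt_of_le_of_ne (hNneg _) fun h => hSine ((hN0 _).mp h.symm)
  have hes : N S⁻¹ * N (Shat - S) ≤ 1 / 2 := by
    have := mul_le_mul_of_nonneg_left hclose (le_of_lt hs_pos)
    calc N S⁻¹ * N (Shat - S) ≤ N S⁻¹ * (1 / (2 * N S⁻¹)) := this
    _ = 1 / 2 := by
        rw [mul_one_div, mul_comm 2 (N S⁻¹), ← div_div, div_self hs_pos.ne', one_div]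
  -- invertibility of Shat
  have hunit : IsUnit Shat := by
    by_contra h
    rw [Matrix.isUnit_iff_isUnit_det, isUnit_iff_ne_zero, not_not] at h
    obtain ⟨v, hv, hv0⟩ := (Matrix.exists_mulVec_eq_zero_iff).mpr h
    apply aux16_no_eigen N hN0 hNneg hNadd hNsmul hNmul (S⁻¹ * (Shat - S)) _ v hv
    · rw [Matrix.mul_sub, hSiS, Matrix.sub_mulVec, ← Matrix.mulVec_mulVec, hv0,
        Matrix.mulVec_zero, Matrix.one_mulVec, zero_sub]
    · calc N (S⁻¹ * (Shat - S)) ≤ N S⁻¹ * N (Shat - S) := hNmul _ _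
      _ ≤ 1 / 2 := hes
  refine ⟨hunit, ?_⟩
  have hAdet : IsUnit Shat.det := Matrix.isUnit_iff_isUnit_det Shat |>.mp hunit
  have hASh : Shat⁻¹ * Shat = 1 := Matrix.nonsing_inv_mul Shat hAdet
  have key : Shat⁻¹ * (Shat - S) * S⁻¹ = S⁻¹ - Shat⁻¹ := by
    rw [mul_sub, sub_mul, hASh, one_mul, mul_assoc, hSSi, mul_one]
  -- notation
  set E := Shat - S with hE
  set D := Lhat - L with hD
  -- main algebraic identity
  have main_eq : Shat⁻¹ * Lhat - S⁻¹ * L + S⁻¹ * E * S⁻¹ * L - S⁻¹ * D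
      = (S⁻¹ - Shat⁻¹) * (E * (S⁻¹ * L)) - (S⁻¹ - Shat⁻¹) * D := by
    have hdiff : (Shat⁻¹ * Lhat - S⁻¹ * L + S⁻¹ * E * S⁻¹ * L - S⁻¹ * D)
        - ((S⁻¹ - Shat⁻¹) * (E * (S⁻¹ * L)) - (S⁻¹ - Shat⁻¹) * D)
        = (Shat⁻¹ * E * S⁻¹ + (Shat⁻¹ - S⁻¹)) * L := by
      rw [hE, hD]; noncomm_ring
    rw [key] at hdiff
    have : (S⁻¹ - Shat⁻¹ + (Shat⁻¹ - S⁻¹)) = (0 : Matrix (Fin p) (Fin p) ℝ) := by abel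
    rw [this, zero_mul, sub_eq_zero] at hdiff
    exact hdiff
  -- norm of the negative
  have hNneg' : ∀ A, N (-A) = N A := fun A => by
    have := hNsmul (-1) A
    simpa [neg_one_smul] using this
  have hNsub : ∀ A B, N (A - B) ≤ N A + N B := fun A B => by
    calc N (A - B) = N (A + -B) := by rw [sub_eq_add_neg]
    _ ≤ N A + N (-B) := hNadd _ _
    _ = N A + N B := by rw [hNneg']
  -- bound on N Shat⁻¹
  have hkey_norm : N (S⁻¹ - Shat⁻¹) ≤ N Shat⁻¹ * N E * N S⁻¹ := by
    rw [← key]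
    calc N (Shat⁻¹ * E * S⁻¹) ≤ N (Shat⁻¹ * E) * N S⁻¹ := hNmul _ _
    _ ≤ N Shat⁻¹ * N E * N S⁻¹ :=
        mul_le_mul_of_nonneg_right (hNmul _ _) (hNneg _)
  have hA_le : N Shat⁻¹ ≤ 2 * N S⁻¹ := by
    have h1 : N Shat⁻¹ ≤ N (S⁻¹ - Shat⁻¹) + N S⁻¹ := by
      have : Shat⁻¹ = -(S⁻¹ - Shat⁻¹) + S⁻¹ := by abel
      calc N Shat⁻¹ = N (-(S⁻¹ - Shat⁻¹) + S⁻¹) := by rw [← this]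
      _ ≤ N (-(S⁻¹ - Shat⁻¹)) + N S⁻¹ := hNadd _ _
      _ = N (S⁻¹ - Shat⁻¹) + N S⁻¹ := by rw [hNneg']
    have h2 : N Shat⁻¹ * N E * N S⁻¹ ≤ N Shat⁻¹ * (1 / 2) := by
      calc N Shat⁻¹ * N E * N S⁻¹ = N Shat⁻¹ * (N S⁻¹ * N E) := by ring
      _ ≤ N Shat⁻¹ * (1 / 2) := mul_le_mul_of_nonneg_left hes (hNneg _)
    have := hkey_norm
    linarith
  have hSiA : N (S⁻¹ - Shat⁻¹) ≤ 2 * N S⁻¹ ^ 2 * N E := by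
    calc N (S⁻¹ - Shat⁻¹) ≤ N Shat⁻¹ * N E * N S⁻¹ := hkey_norm
    _ ≤ (2 * N S⁻¹) * N E * N S⁻¹ := by
        apply mul_le_mul_of_nonneg_right _ (hNneg _)
        exact mul_le_mul_of_nonneg_right hA_le (hNneg _)
    _ = 2 * N S⁻¹ ^ 2 * N E := by ring
  -- final bound
  rw [main_eq]
  have hb1 : N ((S⁻¹ - Shat⁻¹) * (E * (S⁻¹ * L)))
      ≤ (2 * N S⁻¹ ^ 2 * N E) * (N E * (N S⁻¹ * N L)) := by
    calc N ((S⁻¹ - Shat⁻¹) * (E * (S⁻¹ * L)))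
        ≤ N (S⁻¹ - Shat⁻¹) * N (E * (S⁻¹ * L)) := hNmul _ _
    _ ≤ (2 * N S⁻¹ ^ 2 * N E) * (N E * (N S⁻¹ * N L)) := by
        apply mul_le_mul hSiA _ (hNneg _) (mul_nonneg (mul_nonneg (by norm_num) (sq_nonneg _)) (hNneg _))
        calc N (E * (S⁻¹ * L)) ≤ N E * N (S⁻¹ * L) := hNmul _ _
        _ ≤ N E * (N S⁻¹ * N L) := mul_le_mul_of_nonneg_left (hNmul _ _) (hNneg _)
  have hb2 : N ((S⁻¹ - Shat⁻¹) * D) ≤ (2 * N S⁻¹ ^ 2 * N E) * N D := by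
    calc N ((S⁻¹ - Shat⁻¹) * D) ≤ N (S⁻¹ - Shat⁻¹) * N D := hNmul _ _
    _ ≤ (2 * N S⁻¹ ^ 2 * N E) * N D := mul_le_mul_of_nonneg_right hSiA (hNneg _)
  calc N ((S⁻¹ - Shat⁻¹) * (E * (S⁻¹ * L)) - (S⁻¹ - Shat⁻¹) * D)
      ≤ N ((S⁻¹ - Shat⁻¹) * (E * (S⁻¹ * L))) + N ((S⁻¹ - Shat⁻¹) * D) := hNsub _ _
  _ ≤ (2 * N S⁻¹ ^ 2 * N E) * (N E * (N S⁻¹ * N L)) + (2 * N S⁻¹ ^ 2 * N E) * N D := by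
      linarith [hb1, hb2]
  _ = 2 * N S⁻¹ ^ 3 * N L * N E ^ 2 + 2 * N S⁻¹ ^ 2 * N E * N D := by ring
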